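/- Let G be a group acting on a tree T, ṽ a vertex with Stab(ṽ) = G_v, and suppose that for every finite path ρ in T starting at ṽ there are, up to G_v-conjugacy, only finitely many infinite subgroups of the form Stab_pt(ρ). Assume further that any intersection of finitely many G_v-conjugates of these finitely many path-stabilizer representatives falls into finitely many G_v-conjugacy classes of infinite subgroups. Then there are only finitely many G_v-conjugacy classes of infinite subgroups of the form Stab_pt(T') where T' ranges over finite subtrees of T containing ṽ. -/

import Mathlib

/-- The conjugate subgroup `g H g⁻¹`. -/
def conjSub {G : Type*} [Group G] (g : G) (H : Subgroup G) : Subgroup G :=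
  H.map (MulAut.conj g).toMonoidHom

/-- The pointwise stabilizer of a subset `S` for a group action. -/
def ptStab (G : Type*) [Group G] {V : Type*} [MulAction G V] (S : Set V) : Subgroup G where
  carrier := {g : G | ∀ x ∈ S, g • x = x}
  one_mem' := by intro x _; simp
  mul_mem' := by
    intro a b ha hb x hx
    rw [mul_smul, hb x hx, ha x hx]
  inv_mem' := by
    intro a ha x hx
    exact inv_smul_eq_iff.mpr (ha x hx).symm

/-- Let `G` act on a tree `T`, `v₀` a vertex with stabilizer `G_v`.
Suppose that up to `G_v`-conjugacy there are finitely many infinite pointwise stabilizers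
of finite paths starting at `v₀` (with a finite set of path-stabilizer representatives),
and that finite intersections of `G_v`-conjugates of these representatives fall into
finitely many `G_v`-conjugacy classes of infinite subgroups.  Then there are only finitely
many `G_v`-conjugacy classes of infinite subgroups of the form `Stab_pt(T')` for finite
subtrees `T'` of `T` containing `v₀`. -/
theorem stmt17 {G V : Type*} [Group G] [MulAction G V]
    (T : SimpleGraph V) (htree : T.IsTree)
    (hact : ∀ (g : G) (x y : V), T.Adj x y → T.Adj (g • x) (g • y))
    (v₀ : V) (Gv : Subgroup G) (hGv : Gv = MulAction.stabilizer G v₀)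
    (hpaths : ∃ F : Finset (Subgroup G),
      (∀ K ∈ F, ∃ (w : V) (p : T.Walk v₀ w), p.IsPath ∧
          K = ptStab G {x : V | x ∈ p.support}) ∧
      (∀ (w : V) (p : T.Walk v₀ w), p.IsPath →
          Infinite ↥(ptStab G {x : V | x ∈ p.support}) →
          ∃ K ∈ F, ∃ g ∈ Gv, conjSub g K = ptStab G {x : V | x ∈ p.support}) ∧
      (∃ F₂ : Finset (Subgroup G),
        ∀ (k : ℕ), 0 < k → ∀ (Ks : Fin k → Subgroup G) (gs : Fin k → G),
          (∀ j, Ks j ∈ F) → (∀ j, gs j ∈ Gv) →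
          Infinite ↥(⨅ j, conjSub (gs j) (Ks j)) →
          ∃ K₂ ∈ F₂, ∃ g ∈ Gv, conjSub g K₂ = ⨅ j, conjSub (gs j) (Ks j))) :
    ∃ F₃ : Finset (Subgroup G), ∀ S : Set V,
      S.Finite → v₀ ∈ S → (T.induce S).Connected →
      Infinite ↥(ptStab G S) →
      ∃ K ∈ F₃, ∃ g ∈ Gv, conjSub g K = ptStab G S := by
  classical
  obtain ⟨F, hF1, hF2, F₂, hF₂⟩ := hpaths
  refine ⟨F₂, ?_⟩
  intro S hSfin hv₀ hconn hinf
  have hmono : ∀ (A B : Set V), A ⊆ B → ptStab G B ≤ ptStab G A := by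
    intro A B hAB a ha x hx
    exact ha x (hAB hx)
  have hpath : ∀ w : V, w ∈ S → ∃ (p : T.Walk v₀ w), p.IsPath ∧ ∀ x ∈ p.support, x ∈ S := by
    intro w hw
    obtain ⟨q⟩ := hconn ⟨v₀, hv₀⟩ ⟨w, hw⟩
    let f : T.induce S →g T := (SimpleGraph.Embedding.induce S).toHom
    let q' : T.Walk v₀ w := q.map f
    refine ⟨q'.toPath, q'.toPath.2, ?_⟩
    intro x hx
    have hx' := SimpleGraph.Walk.support_toPath_subset q' hx
    rw [show q'.support = (q.map f).support from rfl, SimpleGraph.Walk.support_map] at hx'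
    obtain ⟨y, _, rfl⟩ := List.mem_map.mp hx'
    exact y.2
  choose p hp hpS using hpath
  have hle : ∀ w (hw : w ∈ S), ptStab G S ≤ ptStab G {x | x ∈ (p w hw).support} :=
    fun w hw => hmono _ _ (fun x hx => hpS w hw x hx)
  have hinfw : ∀ w (hw : w ∈ S), Infinite ↥(ptStab G {x | x ∈ (p w hw).support}) := by
    intro w hw
    exact Infinite.of_injective _ (Subgroup.inclusion_injective (hle w hw))
  choose K hK g₁ hg₁ hKg using fun w hw => hF2 w (p w hw) (hp w hw) (hinfw w hw)
  have hv₀f : v₀ ∈ hSfin.toFinset := hSfin.mem_toFinset.mpr hv₀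
  set k := hSfin.toFinset.card with hk
  have hkpos : 0 < k := Finset.card_pos.mpr ⟨v₀, hv₀f⟩
  let e : Fin k ≃ hSfin.toFinset := (hSfin.toFinset.equivFin).symm
  have hmem : ∀ j : Fin k, ((e j : V) ∈ S) := fun j => hSfin.mem_toFinset.mp (e j).2
  let Ks : Fin k → Subgroup G := fun j => K _ (hmem j)
  let gs : Fin k → G := fun j => g₁ _ (hmem j)
  have key : (⨅ j, conjSub (gs j) (Ks j)) = ptStab G S := by
    apply le_antisymm
    · intro a ha x hx
      have hj : ∀ j : Fin k, a ∈ ptStab G {y | y ∈ (p _ (hmem j)).support} := by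
        intro j
        have h := (Subgroup.mem_iInf.mp ha) j
        rwa [show conjSub (gs j) (Ks j) = _ from hKg _ (hmem j)] at h
      obtain ⟨j, hej⟩ : ∃ j : Fin k, (e j : V) = x :=
        ⟨e.symm ⟨x, hSfin.mem_toFinset.mpr hx⟩, by simp⟩
      subst hej
      exact hj j _ (SimpleGraph.Walk.end_mem_support _)
    · apply le_iInf
      intro j
      rw [show conjSub (gs j) (Ks j) = _ from hKg _ (hmem j)]
      exact hle _ (hmem j)
  have hinf' : Infinite ↥(⨅ j, conjSub (gs j) (Ks j)) := key.symm ▸ hinf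
  obtain ⟨K₂, hK₂, g₂, hg₂, heq⟩ :=
    hF₂ k hkpos Ks gs (fun j => hK _ (hmem j)) (fun j => hg₁ _ (hmem j)) hinf'
  exact ⟨K₂, hK₂, g₂, hg₂, heq.trans key⟩
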